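/- Let α be a type, X ⊆ α a set, ι a finite index set, n : ι → α → ℂ and d : ι → α → ℝ functions such that d i x > 0 for every i ∈ ι and every x ∈ X. Define F(x) = ∑_{i ∈ ι} |n i x|² / (d i x) and F_q(x, y) = ∑_{i ∈ ι} (2·Re(conj(y i)·(n i x)) − |y i|²·(d i x)) for y : ι → ℂ. Then a point x* ∈ X satisfies F(x*) ≥ F(x) for all x ∈ X if and only if the pair (x*, y*) with y* i = (n i x*)/(d i x*) satisfies F_q(x*, y*) ≥ F_q(x, y) for all x ∈ X and all y : ι → ℂ; moreover in that case F(x*) = F_q(x*, y*). -/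

import Mathlib

open scoped BigOperators

lemma term_le (nc : ℂ) (dc : ℝ) (hd : 0 < dc) (y : ℂ) :
    2 * ((starRingEnd ℂ) y * nc).re - ‖y‖ ^ 2 * dc ≤ ‖nc‖ ^ 2 / dc := by
  have key : ‖nc‖ ^ 2 / dc - (2 * ((starRingEnd ℂ) y * nc).re - ‖y‖ ^ 2 * dc)
      = Complex.normSq (nc - y * dc) / dc := by
    rw [Complex.sq_norm, Complex.sq_norm]
    field_simp
    simp [Complex.normSq_apply, Complex.mul_re, Complex.sub_re, Complex.sub_im,
      Complex.mul_im, Complex.ofReal_re, Complex.ofReal_im]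
    ring
  nlinarith [Complex.normSq_nonneg (nc - y * dc), div_nonneg (Complex.normSq_nonneg (nc - y * dc)) hd.le]

lemma term_eq (nc : ℂ) (dc : ℝ) (hd : 0 < dc) :
    2 * ((starRingEnd ℂ) (nc / (dc : ℂ)) * nc).re - ‖nc / (dc : ℂ)‖ ^ 2 * dc
      = ‖nc‖ ^ 2 / dc := by
  have hdc : (dc : ℂ) ≠ 0 := by exact_mod_cast hd.ne'
  rw [show ‖nc / (dc : ℂ)‖ = ‖nc‖ / dc by
    rw [norm_div, Complex.norm_real, Real.norm_of_nonneg hd.le]]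
  have : (starRingEnd ℂ) (nc / (dc : ℂ)) * nc = ((Complex.normSq nc / dc : ℝ) : ℂ) := by
    rw [map_div₀]
    push_cast
    rw [Complex.conj_ofReal]
    field_simp
    rw [mul_comm, Complex.mul_conj]
  rw [this, Complex.ofReal_re, ← Complex.sq_norm]
  field_simp
  ring

theorem quadratic_transform_equivalence {α : Type*} {ι : Type*} [Fintype ι]
    (X : Set α) (n : ι → α → ℂ) (d : ι → α → ℝ)
    (hd : ∀ i, ∀ x ∈ X, 0 < d i x)
    (F : α → ℝ) (hF : ∀ x, F x = ∑ i, ‖n i x‖ ^ 2 / d i x)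
    (Fq : α → (ι → ℂ) → ℝ)
    (hFq : ∀ x, ∀ y : ι → ℂ,
      Fq x y = ∑ i, (2 * ((starRingEnd ℂ) (y i) * n i x).re -
        ‖y i‖ ^ 2 * d i x))
    (xstar : α) (hxstar : xstar ∈ X) :
    ((∀ x ∈ X, F x ≤ F xstar) ↔
        (∀ x ∈ X, ∀ y : ι → ℂ,
          Fq x y ≤ Fq xstar (fun i => n i xstar / (d i xstar : ℂ)))) ∧
      ((∀ x ∈ X, F x ≤ F xstar) →
        F xstar = Fq xstar (fun i => n i xstar / (d i xstar : ℂ))) := by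
  -- Fq x y ≤ F x for any x ∈ X
  have hle : ∀ x ∈ X, ∀ y : ι → ℂ, Fq x y ≤ F x := by
    intro x hx y
    rw [hFq, hF]
    exact Finset.sum_le_sum fun i _ => term_le (n i x) (d i x) (hd i x hx) (y i)
  -- Fq x (n x / d x) = F x for x ∈ X
  have heq : ∀ x ∈ X, Fq x (fun i => n i x / (d i x : ℂ)) = F x := by
    intro x hx
    rw [hFq, hF]
    exact Finset.sum_congr rfl fun i _ => term_eq (n i x) (d i x) (hd i x hx)
  constructor
  · constructor
    · intro hmax x hx y
      calc Fq x y ≤ F x := hle x hx y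
        _ ≤ F xstar := hmax x hx
        _ = _ := (heq xstar hxstar).symm
    · intro hq x hx
      calc F x = Fq x (fun i => n i x / (d i x : ℂ)) := (heq x hx).symm
        _ ≤ Fq xstar (fun i => n i xstar / (d i xstar : ℂ)) := hq x hx _
        _ = F xstar := heq xstar hxstar
  · intro _; exact (heq xstar hxstar).symm
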